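/- Let π: G₁ → B(H) and σ: G₂ → B(K) be frame representations of discrete countable abelian groups. If {π(g)v}_{g∈G₁} is a frame for H with frame bounds A₁, B₁ and {σ(h)w}_{h∈G₂} is a frame for K with frame bounds A₂, B₂, then {(π⊗σ)(g,h)(v⊗w)}_{(g,h)∈G₁⊕G₂} is a frame for the Hilbert space tensor product H⊗K with frame bounds A₁A₂ and B₁B₂. -/

import Mathlib

open scoped ComplexConjugate

/-- Parseval identity for a Hilbert basis, in squared-norm form. -/
private lemma parseval_sq {E : Type*} [NormedAddCommGroup E] [InnerProductSpace ℂ E]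
    {ι : Type*} (b : HilbertBasis ι ℂ E) (x : E) :
    Summable (fun i => ‖(inner ℂ x (b i) : ℂ)‖ ^ 2) ∧
      ∑' i, ‖(inner ℂ x (b i) : ℂ)‖ ^ 2 = ‖x‖ ^ 2 := by
  have key : ∀ i, (inner ℂ x (b i) : ℂ) * inner ℂ (b i) x
      = ((‖(inner ℂ x (b i) : ℂ)‖ ^ 2 : ℝ) : ℂ) := by
    intro i
    rw [← inner_conj_symm (b i) x, Complex.mul_conj']
    push_cast
    ring
  have hs := (b.summable_inner_mul_inner x x).congr key
  have hsum := Complex.summable_ofReal.mp hs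
  refine ⟨hsum, ?_⟩
  have ht : ∑' i, ((‖(inner ℂ x (b i) : ℂ)‖ ^ 2 : ℝ) : ℂ) = (inner ℂ x x : ℂ) := by
    rw [← tsum_congr key]
    exact b.tsum_inner_mul_inner x x
  rw [← Complex.ofReal_tsum] at ht
  have h2 : (inner ℂ x x : ℂ) = ((‖x‖ ^ 2 : ℝ) : ℂ) := by
    rw [inner_self_eq_norm_sq_to_K]
    norm_cast
  exact Complex.ofReal_injective (ht.trans h2)

set_option maxHeartbeats 1000000 in
theorem tensor_product_frame_representation_bounds
    {H K T : Type*}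
    [NormedAddCommGroup H] [InnerProductSpace ℂ H] [CompleteSpace H]
      [TopologicalSpace.SeparableSpace H]
    [NormedAddCommGroup K] [InnerProductSpace ℂ K] [CompleteSpace K]
      [TopologicalSpace.SeparableSpace K]
    [NormedAddCommGroup T] [InnerProductSpace ℂ T] [CompleteSpace T]
    {G₁ G₂ : Type*} [CommGroup G₁] [Countable G₁] [CommGroup G₂] [Countable G₂]
    -- the tensor product structure
    (tm : H →ₗ[ℂ] K →ₗ[ℂ] T)
    (htm_inner : ∀ (x x' : H) (y y' : K),
      (inner ℂ (tm x y) (tm x' y') : ℂ) = (inner ℂ x x' : ℂ) * (inner ℂ y y' : ℂ))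
    (htm_dense : Dense (Submodule.span ℂ {z : T | ∃ x y, tm x y = z} : Set T))
    -- the unitary representations
    (π : G₁ →* (H ≃ₗᵢ[ℂ] H)) (σ : G₂ →* (K ≃ₗᵢ[ℂ] K))
    -- the frame vectors and frame bounds
    (v : H) (w : K) (A₁ B₁ A₂ B₂ : ℝ)
    (hA₁ : 0 < A₁) (hAB₁ : A₁ ≤ B₁) (hA₂ : 0 < A₂) (hAB₂ : A₂ ≤ B₂)
    (hv_sum : ∀ x : H, Summable fun g => ‖(inner ℂ x (π g v) : ℂ)‖ ^ 2)
    (hv_lower : ∀ x : H, A₁ * ‖x‖ ^ 2 ≤ ∑' g, ‖(inner ℂ x (π g v) : ℂ)‖ ^ 2)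
    (hv_upper : ∀ x : H, ∑' g, ‖(inner ℂ x (π g v) : ℂ)‖ ^ 2 ≤ B₁ * ‖x‖ ^ 2)
    (hw_sum : ∀ y : K, Summable fun h => ‖(inner ℂ y (σ h w) : ℂ)‖ ^ 2)
    (hw_lower : ∀ y : K, A₂ * ‖y‖ ^ 2 ≤ ∑' h, ‖(inner ℂ y (σ h w) : ℂ)‖ ^ 2)
    (hw_upper : ∀ y : K, ∑' h, ‖(inner ℂ y (σ h w) : ℂ)‖ ^ 2 ≤ B₂ * ‖y‖ ^ 2)
    -- the tensor product representation `π ⊗ σ` of `G₁ ⊕ G₂` on `T = H ⊗ K`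
    (τ : (G₁ × G₂) →* (T ≃ₗᵢ[ℂ] T))
    (hτ : ∀ (g : G₁) (h : G₂) (x : H) (y : K), τ (g, h) (tm x y) = tm (π g x) (σ h y)) :
    -- conclusion: `{(π⊗σ)(g,h)(v⊗w)}` is a frame for `H ⊗ K` with bounds `A₁A₂, B₁B₂`
    ∀ z : T,
      Summable (fun p : G₁ × G₂ => ‖(inner ℂ z (τ p (tm v w)) : ℂ)‖ ^ 2) ∧
      A₁ * A₂ * ‖z‖ ^ 2 ≤ ∑' p : G₁ × G₂, ‖(inner ℂ z (τ p (tm v w)) : ℂ)‖ ^ 2 ∧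
      ∑' p : G₁ × G₂, ‖(inner ℂ z (τ p (tm v w)) : ℂ)‖ ^ 2 ≤ B₁ * B₂ * ‖z‖ ^ 2 := by
  classical
  -- norms of elementary tensors
  have hnorm : ∀ (x : H) (y : K), ‖tm x y‖ = ‖x‖ * ‖y‖ := by
    intro x y
    have h1 : (inner ℂ (tm x y) (tm x y) : ℂ) = (inner ℂ x x : ℂ) * inner ℂ y y := htm_inner x x y y
    rw [inner_self_eq_norm_sq_to_K, inner_self_eq_norm_sq_to_K,
      inner_self_eq_norm_sq_to_K] at h1
    have h2 : ‖tm x y‖ ^ 2 = (‖x‖ * ‖y‖) ^ 2 := by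
      norm_cast at h1
      rw [mul_pow]
      exact h1
    nlinarith [norm_nonneg (tm x y), mul_nonneg (norm_nonneg x) (norm_nonneg y)]
  -- continuous bilinear version of `tm`
  let tmL : H →L[ℂ] K →L[ℂ] T :=
    LinearMap.mkContinuous₂ tm 1 (fun x y => by rw [hnorm, one_mul])
  have htmL : ∀ (x : H) (y : K), tmL x y = tm x y := fun x y => rfl
  -- partial inner ℂ product operators
  let L : H → T → K := fun u z =>
    (InnerProductSpace.toDual ℂ K).symm ((innerSL ℂ z).comp (tmL u))
  have hL : ∀ (u : H) (z : T) (y : K), (inner ℂ (L u z) y : ℂ) = inner ℂ z (tm u y) := by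
    intro u z y
    simp only [L]
    rw [InnerProductSpace.toDual_symm_apply]
    rfl
  let R : K → T → H := fun y z =>
    (InnerProductSpace.toDual ℂ H).symm ((innerSL ℂ z).comp (tmL.flip y))
  have hR : ∀ (y : K) (z : T) (x : H), (inner ℂ (R y z) x : ℂ) = inner ℂ z (tm x y) := by
    intro y z x
    simp only [R]
    rw [InnerProductSpace.toDual_symm_apply]
    rfl
  -- Hilbert bases
  obtain ⟨wH, eb, -⟩ := exists_hilbertBasis ℂ H
  obtain ⟨wK, fb, -⟩ := exists_hilbertBasis ℂ K
  -- the tensor family is orthonormal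
  have horth : Orthonormal ℂ (fun p : wH × wK => tm (eb p.1) (fb p.2)) := by
    rw [orthonormal_iff_ite]
    intro p q
    rw [htm_inner, orthonormal_iff_ite.mp eb.orthonormal p.1 q.1,
      orthonormal_iff_ite.mp fb.orthonormal p.2 q.2]
    by_cases h1 : p.1 = q.1 <;> by_cases h2 : p.2 = q.2 <;>
      simp [h1, h2, Prod.ext_iff]
  -- the tensor family has dense span
  set S : Submodule ℂ T :=
    (Submodule.span ℂ (Set.range (fun p : wH × wK => tm (eb p.1) (fb p.2)))).topologicalClosure
    with hSdef
  have hSclosed : IsClosed (S : Set T) := Submodule.isClosed_topologicalClosure _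
  have hbase : ∀ (i : wH) (j : wK), tm (eb i) (fb j) ∈ S := fun i j =>
    Submodule.le_topologicalClosure _ (Submodule.subset_span ⟨(i, j), rfl⟩)
  have hstep1 : ∀ (j : wK) (x : H), tm x (fb j) ∈ S := by
    intro j
    have hsub : ∀ x ∈ Submodule.span ℂ (Set.range (⇑eb)), tm x (fb j) ∈ S := by
      intro x hx
      induction hx using Submodule.span_induction with
      | mem a ha => obtain ⟨i, rfl⟩ := ha; exact hbase i j
      | zero => rw [map_zero, LinearMap.zero_apply]; exact S.zero_mem
      | add a b _ _ ha hb => rw [map_add, LinearMap.add_apply]; exact S.add_mem ha hb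
      | smul c a _ ha => rw [map_smul, LinearMap.smul_apply]; exact S.smul_mem c ha
    intro x
    have hcl : IsClosed ((tmL.flip (fb j)) ⁻¹' (S : Set T)) :=
      hSclosed.preimage (tmL.flip (fb j)).continuous
    have hsubset : (Submodule.span ℂ (Set.range (⇑eb)) : Set H) ⊆
        (tmL.flip (fb j)) ⁻¹' (S : Set T) := fun a ha => hsub a ha
    have h2 := closure_minimal hsubset hcl
    have h3 : closure (Submodule.span ℂ (Set.range (⇑eb)) : Set H) = Set.univ := by
      rw [← Submodule.topologicalClosure_coe, eb.dense_span, Submodule.top_coe]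
    exact h2 (h3 ▸ Set.mem_univ x)
  have hmem : ∀ (x : H) (y : K), tm x y ∈ S := by
    intro x
    have hsub : ∀ y ∈ Submodule.span ℂ (Set.range (⇑fb)), tm x y ∈ S := by
      intro y hy
      induction hy using Submodule.span_induction with
      | mem a ha => obtain ⟨j, rfl⟩ := ha; exact hstep1 j x
      | zero => rw [map_zero]; exact S.zero_mem
      | add a b _ _ ha hb => rw [map_add]; exact S.add_mem ha hb
      | smul c a _ ha => rw [map_smul]; exact S.smul_mem c ha
    intro y
    have hcl : IsClosed ((tmL x) ⁻¹' (S : Set T)) := hSclosed.preimage (tmL x).continuous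
    have hsubset : (Submodule.span ℂ (Set.range (⇑fb)) : Set K) ⊆
        (tmL x) ⁻¹' (S : Set T) := fun a ha => hsub a ha
    have h2 := closure_minimal hsubset hcl
    have h3 : closure (Submodule.span ℂ (Set.range (⇑fb)) : Set K) = Set.univ := by
      rw [← Submodule.topologicalClosure_coe, fb.dense_span, Submodule.top_coe]
    exact h2 (h3 ▸ Set.mem_univ y)
  have hdenseT : ⊤ ≤ S := by
    intro z _
    have h1 : (Submodule.span ℂ {z : T | ∃ x y, tm x y = z} : Set T) ⊆ (S : Set T) := by
      refine Submodule.span_le.mpr ?_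
      rintro t ⟨x, y, rfl⟩
      exact hmem x y
    have h2 := closure_minimal h1 hSclosed
    exact h2 (htm_dense.closure_eq ▸ Set.mem_univ z)
  let tb : HilbertBasis (wH × wK) ℂ T := HilbertBasis.mk horth hdenseT
  have htb : ∀ p : wH × wK, tb p = tm (eb p.1) (fb p.2) := fun p => by
    rw [show ⇑tb = fun p : wH × wK => tm (eb p.1) (fb p.2) from HilbertBasis.coe_mk _ _]
  -- main estimates, for a fixed z
  intro z
  -- key identity
  have key : ∀ (g : G₁) (h : G₂),
      (inner ℂ z (τ (g, h) (tm v w)) : ℂ) = inner ℂ (L (π g v) z) (σ h w) := by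
    intro g h
    rw [hτ, hL]
  -- Parseval-type computations
  have hLnorm : ∀ u : H,
      Summable (fun j : wK => ‖(inner ℂ z (tm u (fb j)) : ℂ)‖ ^ 2) ∧
        ∑' j : wK, ‖(inner ℂ z (tm u (fb j)) : ℂ)‖ ^ 2 = ‖L u z‖ ^ 2 := by
    intro u
    obtain ⟨hs, ht⟩ := parseval_sq fb (L u z)
    refine ⟨hs.congr fun j => by rw [hL], ?_⟩
    rw [← ht]
    exact tsum_congr fun j => by rw [hL]
  have hRnorm : ∀ y : K,
      Summable (fun i : wH => ‖(inner ℂ z (tm (eb i) y) : ℂ)‖ ^ 2) ∧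
        ∑' i : wH, ‖(inner ℂ z (tm (eb i) y) : ℂ)‖ ^ 2 = ‖R y z‖ ^ 2 := by
    intro y
    obtain ⟨hs, ht⟩ := parseval_sq eb (R y z)
    refine ⟨hs.congr fun i => by rw [hR], ?_⟩
    rw [← ht]
    exact tsum_congr fun i => by rw [hR]
  -- Parseval for z over the tensor basis
  obtain ⟨hDsum, hDtsum⟩ := parseval_sq tb z
  have hDsum' : Summable (fun p : wH × wK => ‖(inner ℂ z (tm (eb p.1) (fb p.2)) : ℂ)‖ ^ 2) :=
    hDsum.congr fun p => by rw [htb]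
  have hDtsum' : ∑' p : wH × wK, ‖(inner ℂ z (tm (eb p.1) (fb p.2)) : ℂ)‖ ^ 2 = ‖z‖ ^ 2 := by
    rw [← hDtsum]; exact tsum_congr fun p => by rw [htb]
  -- sum over j of ‖R (fb j) z‖²
  have hDswap : Summable (fun p : wK × wH => ‖(inner ℂ z (tm (eb p.2) (fb p.1)) : ℂ)‖ ^ 2) :=
    (Equiv.prodComm wK wH).summable_iff.mpr hDsum'
  have hRsum : Summable (fun j : wK => ‖R (fb j) z‖ ^ 2) := by
    have := ((summable_prod_of_nonneg (fun p => by positivity)).mp hDswap).2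
    exact this.congr fun j => (hRnorm (fb j)).2
  have hRtsum : ∑' j : wK, ‖R (fb j) z‖ ^ 2 = ‖z‖ ^ 2 := by
    have h1 : ∑' p : wK × wH, ‖(inner ℂ z (tm (eb p.2) (fb p.1)) : ℂ)‖ ^ 2 = ‖z‖ ^ 2 := by
      rw [← hDtsum']
      exact ((Equiv.prodComm wK wH).tsum_eq
        (fun p : wH × wK => ‖(inner ℂ z (tm (eb p.1) (fb p.2)) : ℂ)‖ ^ 2))
    rw [← h1, Summable.tsum_prod' hDswap
      (fun j => ((summable_prod_of_nonneg (fun p => by positivity)).mp hDswap).1 j)]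
    exact tsum_congr fun j => ((hRnorm (fb j)).2).symm
  -- the frame bounds in H, applied to each R (fb j) z
  have hE : ∀ (j : wK) (g : G₁),
      ‖(inner ℂ (R (fb j) z) (π g v) : ℂ)‖ ^ 2 = ‖(inner ℂ z (tm (π g v) (fb j)) : ℂ)‖ ^ 2 := by
    intro j g
    rw [hR]
  -- summability of the double family E over wK × G₁
  have hEsum : Summable (fun p : wK × G₁ => ‖(inner ℂ z (tm (π p.2 v) (fb p.1)) : ℂ)‖ ^ 2) := by
    rw [summable_prod_of_nonneg (fun p => by positivity)]
    constructor
    · intro j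
      exact (hv_sum (R (fb j) z)).congr fun g => hE j g
    · apply Summable.of_nonneg_of_le (fun j => tsum_nonneg fun g => by positivity)
        (fun j => ?_) (hRsum.mul_left B₁)
      calc ∑' g : G₁, ‖(inner ℂ z (tm (π g v) (fb j)) : ℂ)‖ ^ 2
          = ∑' g : G₁, ‖(inner ℂ (R (fb j) z) (π g v) : ℂ)‖ ^ 2 :=
            tsum_congr fun g => (hE j g).symm
        _ ≤ B₁ * ‖R (fb j) z‖ ^ 2 := hv_upper (R (fb j) z)
  -- per-g sums give ‖L (π g v) z‖²
  have hEg : ∀ g : G₁, ∑' j : wK, ‖(inner ℂ z (tm (π g v) (fb j)) : ℂ)‖ ^ 2 = ‖L (π g v) z‖ ^ 2 :=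
    fun g => (hLnorm (π g v)).2
  have hEswap : Summable (fun p : G₁ × wK => ‖(inner ℂ z (tm (π p.1 v) (fb p.2)) : ℂ)‖ ^ 2) :=
    (Equiv.prodComm G₁ wK).summable_iff.mpr hEsum
  have hsL : Summable (fun g : G₁ => ‖L (π g v) z‖ ^ 2) := by
    have := ((summable_prod_of_nonneg (fun p => by positivity)).mp hEswap).2
    exact this.congr fun g => hEg g
  have hsLtsum : ∑' g : G₁, ‖L (π g v) z‖ ^ 2
      = ∑' (j : wK) (g : G₁), ‖(inner ℂ z (tm (π g v) (fb j)) : ℂ)‖ ^ 2 := by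
    rw [← tsum_congr hEg]
    exact (Summable.tsum_comm' (f := fun (g : G₁) (j : wK) => ‖(inner ℂ z (tm (π g v) (fb j)) : ℂ)‖ ^ 2)
      hEswap
      (fun g => ((summable_prod_of_nonneg (fun p => by positivity)).mp hEswap).1 g)
      (fun j => ((summable_prod_of_nonneg (fun p => by positivity)).mp hEsum).1 j)).symm
  have hsL_upper : ∑' g : G₁, ‖L (π g v) z‖ ^ 2 ≤ B₁ * ‖z‖ ^ 2 := by
    rw [hsLtsum, ← hRtsum, ← tsum_mul_left]
    refine Summable.tsum_le_tsum (fun j => ?_)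
      (((summable_prod_of_nonneg (fun p => by positivity)).mp hEsum).2) (hRsum.mul_left B₁)
    calc ∑' g : G₁, ‖(inner ℂ z (tm (π g v) (fb j)) : ℂ)‖ ^ 2
        = ∑' g : G₁, ‖(inner ℂ (R (fb j) z) (π g v) : ℂ)‖ ^ 2 := tsum_congr fun g => (hE j g).symm
      _ ≤ B₁ * ‖R (fb j) z‖ ^ 2 := hv_upper (R (fb j) z)
  have hsL_lower : A₁ * ‖z‖ ^ 2 ≤ ∑' g : G₁, ‖L (π g v) z‖ ^ 2 := by
    rw [hsLtsum, ← hRtsum, ← tsum_mul_left]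
    refine Summable.tsum_le_tsum (fun j => ?_) (hRsum.mul_left A₁)
      (((summable_prod_of_nonneg (fun p => by positivity)).mp hEsum).2)
    calc A₁ * ‖R (fb j) z‖ ^ 2
        ≤ ∑' g : G₁, ‖(inner ℂ (R (fb j) z) (π g v) : ℂ)‖ ^ 2 := hv_lower (R (fb j) z)
      _ = ∑' g : G₁, ‖(inner ℂ z (tm (π g v) (fb j)) : ℂ)‖ ^ 2 := tsum_congr fun g => hE j g
  -- now the final double sum over G₁ × G₂
  have hFg : ∀ g : G₁, Summable (fun h : G₂ => ‖(inner ℂ z (τ (g, h) (tm v w)) : ℂ)‖ ^ 2) := by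
    intro g
    exact (hw_sum (L (π g v) z)).congr fun h => by rw [← key]
  have hFgsum : ∀ g : G₁, ∑' h : G₂, ‖(inner ℂ z (τ (g, h) (tm v w)) : ℂ)‖ ^ 2
      = ∑' h : G₂, ‖(inner ℂ (L (π g v) z) (σ h w) : ℂ)‖ ^ 2 :=
    fun g => tsum_congr fun h => by rw [key]
  have hFsum : Summable (fun p : G₁ × G₂ => ‖(inner ℂ z (τ p (tm v w)) : ℂ)‖ ^ 2) := by
    rw [summable_prod_of_nonneg (fun p => by positivity)]
    refine ⟨fun g => hFg g, ?_⟩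
    apply Summable.of_nonneg_of_le (fun g => tsum_nonneg fun h => by positivity)
      (fun g => ?_) (hsL.mul_left B₂)
    calc ∑' h : G₂, ‖(inner ℂ z (τ (g, h) (tm v w)) : ℂ)‖ ^ 2
        = ∑' h : G₂, ‖(inner ℂ (L (π g v) z) (σ h w) : ℂ)‖ ^ 2 := hFgsum g
      _ ≤ B₂ * ‖L (π g v) z‖ ^ 2 := hw_upper (L (π g v) z)
  refine ⟨hFsum, ?_, ?_⟩
  · -- lower bound
    have hmain : A₂ * ∑' g : G₁, ‖L (π g v) z‖ ^ 2
        ≤ ∑' p : G₁ × G₂, ‖(inner ℂ z (τ p (tm v w)) : ℂ)‖ ^ 2 := by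
      rw [Summable.tsum_prod' hFsum (fun g => hFg g), ← tsum_mul_left]
      refine Summable.tsum_le_tsum (fun g => ?_) (hsL.mul_left A₂)
        (((summable_prod_of_nonneg (fun p => by positivity)).mp hFsum).2)
      calc A₂ * ‖L (π g v) z‖ ^ 2
          ≤ ∑' h : G₂, ‖(inner ℂ (L (π g v) z) (σ h w) : ℂ)‖ ^ 2 := hw_lower (L (π g v) z)
        _ = ∑' h : G₂, ‖(inner ℂ z (τ (g, h) (tm v w)) : ℂ)‖ ^ 2 := (hFgsum g).symm
    calc A₁ * A₂ * ‖z‖ ^ 2 = A₂ * (A₁ * ‖z‖ ^ 2) := by ring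
      _ ≤ A₂ * ∑' g : G₁, ‖L (π g v) z‖ ^ 2 := by
          exact mul_le_mul_of_nonneg_left hsL_lower hA₂.le
      _ ≤ _ := hmain
  · -- upper bound
    have hmain : ∑' p : G₁ × G₂, ‖(inner ℂ z (τ p (tm v w)) : ℂ)‖ ^ 2
        ≤ B₂ * ∑' g : G₁, ‖L (π g v) z‖ ^ 2 := by
      rw [Summable.tsum_prod' hFsum (fun g => hFg g), ← tsum_mul_left]
      refine Summable.tsum_le_tsum (fun g => ?_)
        (((summable_prod_of_nonneg (fun p => by positivity)).mp hFsum).2) (hsL.mul_left B₂)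
      calc ∑' h : G₂, ‖(inner ℂ z (τ (g, h) (tm v w)) : ℂ)‖ ^ 2
          = ∑' h : G₂, ‖(inner ℂ (L (π g v) z) (σ h w) : ℂ)‖ ^ 2 := hFgsum g
        _ ≤ B₂ * ‖L (π g v) z‖ ^ 2 := hw_upper (L (π g v) z)
    calc ∑' p : G₁ × G₂, ‖(inner ℂ z (τ p (tm v w)) : ℂ)‖ ^ 2
        ≤ B₂ * ∑' g : G₁, ‖L (π g v) z‖ ^ 2 := hmain
      _ ≤ B₂ * (B₁ * ‖z‖ ^ 2) := mul_le_mul_of_nonneg_left hsL_upper (hA₂.trans_le hAB₂).le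
      _ = B₁ * B₂ * ‖z‖ ^ 2 := by ring
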